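/- The number of exotic planar forests (taken up to relabeling of the liana numbers) of order 1 is 2, the number of exotic planar forests of order 2 is 11, and the number of exotic planar forests of order 3 is 95. -/

import Mathlib

/-! Exotic planar forests: decorated planar forests over `{•} ∪ ℕ` in which every
numbered node is a leaf and every number decorates zero or exactly two leaves,
taken up to relabeling of the liana numbers (encoded below by canonically
labelled representatives, the numbers being relabelled by order of occurrence).
The statement counts the exotic planar forests of orders 1, 2 and 3. -/

inductive Dec : Type where
  | bullet : Dec
  | num : ℕ → Dec
  deriving DecidableEq

/-- Decorated planar trees: a decoration together with an ordered list of subtrees. -/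
inductive PTree : Type where
  | node : Dec → List PTree → PTree

/-- Decorated planar forests: ordered lists of decorated planar trees. -/
abbrev Forest : Type := List PTree

namespace PTree

/-- The list of decorations of a tree, in preorder. -/
def decsT : PTree → List Dec
  | .node d ts => d :: (ts.attach.map fun t => decsT t.1).flatten
decreasing_by
  have := List.sizeOf_lt_of_mem t.2
  simp only [PTree.node.sizeOf_spec]
  omega

/-- Every numbered node of the tree is a leaf. -/
def numLeavesT : PTree → Bool
  | .node (.num _) ts => ts.isEmpty
  | .node .bullet ts => ts.attach.all fun t => numLeavesT t.1
decreasing_by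
  have := List.sizeOf_lt_of_mem t.2
  simp only [PTree.node.sizeOf_spec]
  omega

/-- Relabel the numbered nodes of a tree using `f`. -/
def relabelT (f : ℕ → ℕ) : PTree → PTree
  | .node .bullet ts => .node .bullet (ts.attach.map fun t => relabelT f t.1)
  | .node (.num n) ts => .node (.num (f n)) (ts.attach.map fun t => relabelT f t.1)
decreasing_by
  all_goals
    have := List.sizeOf_lt_of_mem t.2
    simp only [PTree.node.sizeOf_spec]
    omega

end PTree

/-- The list of decorations of a forest, in preorder. -/
def decsF (π : Forest) : List Dec := (π.map PTree.decsT).flatten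

/-- The list of numbers decorating the nodes of a forest. -/
def numsF (π : Forest) : List ℕ :=
  (decsF π).filterMap fun d => match d with | .num n => some n | .bullet => none

/-- Every numbered node of the forest is a leaf. -/
def allNumLeaves (π : Forest) : Bool := π.all PTree.numLeavesT

/-- A forest is exotic if every numbered node is a leaf and every number decorates
either zero or exactly two leaves. -/
def IsExotic (π : Forest) : Prop :=
  allNumLeaves π = true ∧ ∀ n : ℕ, (numsF π).count n = 0 ∨ (numsF π).count n = 2

/-- Relabel the numbered nodes of a forest using `f`. -/
def relabelF (f : ℕ → ℕ) (π : Forest) : Forest := π.map (PTree.relabelT f)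

/-- Canonical relabeling of the numbers of a forest, by order of occurrence. -/
def normalizeF (π : Forest) : Forest :=
  relabelF (fun n => (numsF π).dedup.idxOf n) π

/-- The order of an exotic forest: the number of bullet nodes plus half the number
of numbered leaves. -/
def orderF (π : Forest) : ℕ := (decsF π).count Dec.bullet + (numsF π).length / 2

/-- Exotic planar forests, up to relabeling of the lianas (encoded by
canonically labelled representatives). -/
def ExoticForest : Type := {π : Forest // IsExotic π ∧ normalizeF π = π}


/-! ### Auxiliary development -/

mutual
def PTree.decEq : (t s : PTree) → Decidable (t = s)
  | .node d ts, .node e ss =>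
    match instDecidableEqDec d e with
    | isFalse h => isFalse (by simp [h])
    | isTrue h =>
      match PTree.decEqL ts ss with
      | isTrue h2 => isTrue (by rw [h, h2])
      | isFalse h2 => isFalse (by simp [h2])

def PTree.decEqL : (ts ss : List PTree) → Decidable (ts = ss)
  | [], [] => isTrue rfl
  | [], _ :: _ => isFalse (by simp)
  | _ :: _, [] => isFalse (by simp)
  | t :: ts, s :: ss =>
    match PTree.decEq t s with
    | isFalse h => isFalse (by simp [h])
    | isTrue h =>
      match PTree.decEqL ts ss with
      | isTrue h2 => isTrue (by rw [h, h2])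
      | isFalse h2 => isFalse (by simp [h2])
end

instance : DecidableEq PTree := PTree.decEq

/-- A handy induction principle for `PTree`. -/
theorem PTree.my_ind {motive : PTree → Prop}
    (h : ∀ d ts, (∀ t ∈ ts, motive t) → motive (PTree.node d ts)) : ∀ t, motive t
  | .node d ts => h d ts fun t ht => PTree.my_ind h t
termination_by t => sizeOf t
decreasing_by
  have := List.sizeOf_lt_of_mem ht
  simp only [PTree.node.sizeOf_spec]
  omega

/-! Structural (kernel-reducible) versions of the basic operations. -/

mutual
def decsT' : PTree → List Dec
  | .node d ts => d :: decsL ts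
def decsL : List PTree → List Dec
  | [] => []
  | t :: ts => decsT' t ++ decsL ts
end

mutual
def numLvT : PTree → Bool
  | .node (.num _) ts => ts.isEmpty
  | .node .bullet ts => numLvL ts
def numLvL : List PTree → Bool
  | [] => true
  | t :: ts => numLvT t && numLvL ts
end

mutual
def relT (f : ℕ → ℕ) : PTree → PTree
  | .node .bullet ts => .node .bullet (relL f ts)
  | .node (.num n) ts => .node (.num (f n)) (relL f ts)
def relL (f : ℕ → ℕ) : List PTree → List PTree
  | [] => []
  | t :: ts => relT f t :: relL f ts
end

theorem decsT_eq : ∀ t, PTree.decsT t = decsT' t := by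
  intro t
  induction t using PTree.my_ind with
  | h d ts ih =>
    rw [PTree.decsT, decsT']
    have h1 : ts.attach.map (fun t => PTree.decsT t.1) = ts.map decsT' := by
      rw [← List.attach_map_val (l := ts) (f := decsT')]
      exact List.map_congr_left fun t _ => ih t.1 t.2
    rw [h1]
    congr 1
    clear ih h1
    induction ts with
    | nil => rfl
    | cons t ts ihts => rw [decsL]; simp only [List.map_cons, List.flatten_cons, ihts]

theorem decsF_eq (π : Forest) : decsF π = decsL π := by
  unfold decsF
  induction π with
  | nil => rfl
  | cons t ts ih => rw [decsL]; simp only [List.map_cons, List.flatten_cons, ih, decsT_eq]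

theorem numLvT_eq : ∀ t, PTree.numLeavesT t = numLvT t := by
  intro t
  induction t using PTree.my_ind with
  | h d ts ih =>
    cases d with
    | num n => rw [PTree.numLeavesT, numLvT]
    | bullet =>
      rw [PTree.numLeavesT, numLvT]
      have h1 : (ts.attach.all fun t => PTree.numLeavesT t.1) = ts.all numLvT := by
        rw [Bool.eq_iff_iff, List.all_eq_true, List.all_eq_true]
        constructor
        · intro h x hx
          rw [← ih x hx]
          exact h ⟨x, hx⟩ (List.mem_attach ts ⟨x, hx⟩)
        · intro h x _
          rw [ih x.1 x.2]
          exact h x.1 x.2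
      rw [h1]
      clear ih h1
      induction ts with
      | nil => rfl
      | cons t ts ihts => rw [numLvL]; simp [ihts]

theorem allNumLeaves_eq (π : Forest) : allNumLeaves π = numLvL π := by
  unfold allNumLeaves
  induction π with
  | nil => rfl
  | cons t ts ih => rw [numLvL]; simp only [List.all_cons, ih, numLvT_eq]

theorem relT_eq (f : ℕ → ℕ) : ∀ t, PTree.relabelT f t = relT f t := by
  intro t
  induction t using PTree.my_ind with
  | h d ts ih =>
    have h1 : ts.attach.map (fun t => PTree.relabelT f t.1) = ts.map (relT f) := by
      rw [← List.attach_map_val (l := ts) (f := relT f)]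
      exact List.map_congr_left fun t _ => ih t.1 t.2
    have h2 : ts.map (relT f) = relL f ts := by
      clear ih h1
      induction ts with
      | nil => rfl
      | cons t ts ihts => rw [relL]; simp only [List.map_cons, ihts]
    cases d with
    | num n => rw [PTree.relabelT, relT, h1, h2]
    | bullet => rw [PTree.relabelT, relT, h1, h2]

theorem relF_eq (f : ℕ → ℕ) (π : Forest) : relabelF f π = relL f π := by
  unfold relabelF
  induction π with
  | nil => rfl
  | cons t ts ih => rw [relL]; simp only [List.map_cons, ih, relT_eq]

/-- Extract a number from a decoration. -/
def np : Dec → Option ℕ | .num n => some n | .bullet => none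

def nums' (π : Forest) : List ℕ := (decsL π).filterMap np

theorem numsF_eq (π : Forest) : numsF π = nums' π := by
  unfold numsF nums'
  rw [decsF_eq]
  congr 1

def normalize' (π : Forest) : Forest := relL (fun n => (nums' π).dedup.idxOf n) π

theorem normalizeF_eq (π : Forest) : normalizeF π = normalize' π := by
  unfold normalizeF normalize' nums'
  rw [relF_eq, numsF_eq]
  rfl

def order' (π : Forest) : ℕ := (decsL π).count Dec.bullet + (nums' π).length / 2

theorem orderF_eq (π : Forest) : orderF π = order' π := by
  unfold orderF order' nums'
  rw [decsF_eq, numsF_eq]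
  rfl





/-! ### Enumeration of forests by weight -/

def wD : Dec → ℕ | .bullet => 2 | .num _ => 1

def wtT (t : PTree) : ℕ := ((decsT' t).map wD).sum
def wtF (π : Forest) : ℕ := ((decsL π).map wD).sum

theorem wtF_cons (t : PTree) (π : Forest) : wtF (t :: π) = wtT t + wtF π := by
  unfold wtF wtT; rw [decsL]; simp

theorem wtT_node (d : Dec) (ts : List PTree) : wtT (.node d ts) = wD d + wtF ts := by
  unfold wtT wtF; rw [decsT']; simp

theorem wtT_pos (t : PTree) : 1 ≤ wtT t := by
  obtain ⟨d, ts⟩ := t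
  rw [wtT_node]
  cases d <;> simp [wD] <;> omega

def enumA (N : ℕ) : ℕ → ℕ → List PTree × List Forest
  | 0, w => ([], if w = 0 then [[]] else [])
  | fuel+1, w =>
    ((if w = 1 then (List.range N).map (fun i => PTree.node (.num i) []) else []) ++
     (if 2 ≤ w then ((enumA N fuel (w-2)).2).map (fun f => PTree.node .bullet f) else []),
     if w = 0 then [[]] else
       (List.range w).flatMap fun k =>
         ((enumA N fuel (k+1)).1).flatMap fun t =>
           ((enumA N fuel (w-(k+1))).2).map (t :: ·))

theorem mem_enum (N : ℕ) : ∀ fuel : ℕ,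
    (∀ t : PTree, 2 * wtT t ≤ fuel → numLvT t = true →
      (∀ i ∈ (decsT' t).filterMap np, i < N) → t ∈ (enumA N fuel (wtT t)).1) ∧
    (∀ π : Forest, 2 * wtF π + 1 ≤ fuel → numLvL π = true →
      (∀ i ∈ nums' π, i < N) → π ∈ (enumA N fuel (wtF π)).2) := by
  intro fuel
  induction fuel with
  | zero =>
    refine ⟨fun t h _ _ => absurd h (by have := wtT_pos t; omega), fun π h _ _ => by omega⟩
  | succ fuel ih =>
    obtain ⟨ihT, ihF⟩ := ih
    constructor
    · rintro ⟨d, ts⟩ hw hlv hnum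
      cases d with
      | num i =>
        have hts : ts = [] := by rw [numLvT] at hlv; exact List.isEmpty_iff.mp hlv
        subst hts
        have hwt : wtT (PTree.node (.num i) []) = 1 := rfl
        have hiN : i < N := hnum i (by simp [decsT', decsL, np])
        rw [hwt]
        show _ ∈ _ ++ _
        apply List.mem_append_left
        rw [if_pos rfl]
        exact List.mem_map_of_mem (List.mem_range.2 hiN)
      | bullet =>
        rw [wtT_node] at hw ⊢
        have hwD : wD Dec.bullet = 2 := rfl
        rw [hwD] at hw ⊢
        rw [numLvT] at hlv
        have hnum' : ∀ i ∈ nums' ts, i < N := by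
          intro i hi
          exact hnum i hi
        have hmem := ihF ts (by omega) hlv hnum'
        show _ ∈ _ ++ _
        apply List.mem_append_right
        rw [if_pos (by omega)]
        have h2 : 2 + wtF ts - 2 = wtF ts := by omega
        rw [h2]
        exact List.mem_map_of_mem hmem
    · rintro (_ | ⟨t, π⟩) hw hlv hnum
      · show ([] : Forest) ∈ [([] : Forest)]
        exact List.mem_singleton_self []
      · rw [wtF_cons] at hw ⊢
        have h1 := wtT_pos t
        rw [numLvL, Bool.and_eq_true] at hlv
        have hnT : ∀ i ∈ (decsT' t).filterMap np, i < N := by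
          intro i hi
          apply hnum i
          unfold nums'
          rw [decsL, List.filterMap_append]
          exact List.mem_append_left _ hi
        have hnF : ∀ i ∈ nums' π, i < N := by
          intro i hi
          apply hnum i
          unfold nums' at hi ⊢
          rw [decsL, List.filterMap_append]
          exact List.mem_append_right _ hi
        have hT := ihT t (by omega) hlv.1 hnT
        have hF := ihF π (by omega) hlv.2 hnF
        show _ ∈ (if _ = 0 then _ else _)
        rw [if_neg (by omega)]
        rw [List.mem_flatMap]
        refine ⟨wtT t - 1, List.mem_range.2 (by omega), ?_⟩
        rw [List.mem_flatMap]
        have e1 : wtT t - 1 + 1 = wtT t := by omega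
        refine ⟨t, by rw [e1]; exact hT, ?_⟩
        have e2 : wtT t + wtF π - wtT t = wtF π := by omega
        rw [e1, e2]
        exact List.mem_map_of_mem hF

/-! ### Arithmetic facts -/

theorem length_eq_two_mul (L : List ℕ) (h : ∀ x ∈ L, L.count x = 2) :
    L.length = 2 * L.dedup.length := by
  rw [← List.sum_toFinset_count_eq_length, ← List.card_toFinset]
  rw [Finset.sum_congr rfl (fun a ha => h a (List.mem_toFinset.1 ha))]
  rw [Finset.sum_const, smul_eq_mul, mul_comm]

theorem sum_wD (l : List Dec) :
    (l.map wD).sum = 2 * l.count Dec.bullet + (l.filterMap np).length := by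
  induction l with
  | nil => rfl
  | cons d l ih =>
    cases d <;>
      simp [wD, np, List.count_cons, ih, List.filterMap_cons] <;> omega

/-! ### Relabeling and numbers -/

def dmap (f : ℕ → ℕ) : Dec → Dec | .bullet => .bullet | .num n => .num (f n)

theorem decsT'_relT (f : ℕ → ℕ) : ∀ t, decsT' (relT f t) = (decsT' t).map (dmap f) := by
  intro t
  induction t using PTree.my_ind with
  | h d ts ih =>
    have hl : ∀ ss : List PTree, (∀ t ∈ ss, decsT' (relT f t) = (decsT' t).map (dmap f)) →
        decsL (relL f ss) = (decsL ss).map (dmap f) := by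
      intro ss h
      induction ss with
      | nil => rfl
      | cons a as iha =>
        rw [relL, decsL, decsL, List.map_append, h a (List.mem_cons_self (a := a) (l := as)),
          iha (fun x hx => h x (List.mem_cons_of_mem a hx))]
    cases d <;> rw [relT, decsT', decsT', hl ts ih] <;> rfl

theorem decsL_relL (f : ℕ → ℕ) (π : Forest) : decsL (relL f π) = (decsL π).map (dmap f) := by
  induction π with
  | nil => rfl
  | cons t ts ih =>
    rw [relL, decsL, decsL, List.map_append, decsT'_relT, ih]

theorem filterMap_np_dmap (f : ℕ → ℕ) (l : List Dec) :
    (l.map (dmap f)).filterMap np = (l.filterMap np).map f := by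
  induction l with
  | nil => rfl
  | cons d l ih =>
    cases d <;> simp [dmap, np, List.filterMap_cons, ih]

theorem nums'_relL (f : ℕ → ℕ) (π : Forest) : nums' (relL f π) = (nums' π).map f := by
  unfold nums'
  rw [decsL_relL, filterMap_np_dmap]

/-! ### The list of exotic forests of order `n` -/

def pB (n : ℕ) (π : Forest) : Bool :=
  numLvL π && (nums' π).all (fun x => (nums' π).count x == 2) &&
  (normalize' π == π) && (order' π == n)

def Lst (n : ℕ) : List Forest := ((enumA n (4*n+1) (2*n)).2).filter (pB n)

theorem key (n : ℕ) (π : Forest) :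
    ((IsExotic π ∧ normalizeF π = π) ∧ orderF π = n) ↔ π ∈ Lst n := by
  constructor
  · rintro ⟨⟨⟨hlv, hcnt⟩, hnorm⟩, hord⟩
    rw [allNumLeaves_eq] at hlv
    rw [numsF_eq] at hcnt
    rw [normalizeF_eq] at hnorm
    rw [orderF_eq] at hord
    have hcnt2 : ∀ x ∈ nums' π, (nums' π).count x = 2 := by
      intro x hx
      rcases hcnt x with h0 | h2
      · exact absurd (List.count_pos_iff.2 hx) (by omega)
      · exact h2
    have hlen : (nums' π).length = 2 * (nums' π).dedup.length :=
      length_eq_two_mul _ hcnt2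
    unfold order' at hord
    have hw : wtF π = 2 * n := by
      unfold wtF
      rw [sum_wD]
      show 2 * (decsL π).count Dec.bullet + (nums' π).length = 2 * n
      omega
    have hnums : ∀ i ∈ nums' π, i < n := by
      intro i hi
      have hme : nums' π = (nums' π).map (fun x => (nums' π).dedup.idxOf x) := by
        conv_lhs => rw [← hnorm]
        exact nums'_relL _ _
      rw [hme] at hi
      obtain ⟨y, hy, hyi⟩ := List.mem_map.1 hi
      have hlt : (nums' π).dedup.idxOf y < (nums' π).dedup.length :=
        List.idxOf_lt_length_iff.2 (List.mem_dedup.2 hy)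
      omega
    have hmem := (mem_enum n (4*n+1)).2 π (by omega) hlv hnums
    rw [hw] at hmem
    unfold Lst
    rw [List.mem_filter]
    refine ⟨hmem, ?_⟩
    unfold pB
    simp only [Bool.and_eq_true, beq_iff_eq, List.all_eq_true]
    exact ⟨⟨⟨hlv, hcnt2⟩, hnorm⟩, by unfold order'; omega⟩
  · intro h
    unfold Lst at h
    rw [List.mem_filter] at h
    have hp := h.2
    unfold pB at hp
    simp only [Bool.and_eq_true, beq_iff_eq, List.all_eq_true] at hp
    obtain ⟨⟨⟨hlv, hall⟩, hnorm⟩, hord⟩ := hp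
    refine ⟨⟨⟨?_, ?_⟩, ?_⟩, ?_⟩
    · rw [allNumLeaves_eq]; exact hlv
    · intro x
      rw [numsF_eq]
      by_cases hx : x ∈ nums' π
      · right
        exact hall x hx
      · left
        exact List.count_eq_zero.2 hx
    · rw [normalizeF_eq]; exact hnorm
    · rw [orderF_eq]; exact hord

theorem card_n (n : ℕ) :
    Nat.card {π : ExoticForest // orderF π.1 = n} = (Lst n).dedup.length := by
  have e : {π : ExoticForest // orderF π.1 = n} ≃ {π : Forest // π ∈ (Lst n).toFinset} :=
    { toFun := fun x => ⟨x.1.1, List.mem_toFinset.2 ((key n x.1.1).1 ⟨x.1.2, x.2⟩)⟩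
      invFun := fun x => ⟨⟨x.1, ((key n x.1).2 (List.mem_toFinset.1 x.2)).1⟩,
        ((key n x.1).2 (List.mem_toFinset.1 x.2)).2⟩
      left_inv := fun x => rfl
      right_inv := fun x => rfl }
  rw [Nat.card_congr e, Nat.card_eq_fintype_card, Fintype.card_coe, List.card_toFinset]


/-- There are 2, 11 and 95 exotic planar forests of order 1, 2 and 3 respectively. -/
theorem stmt12 :
    Nat.card {π : ExoticForest // orderF π.1 = 1} = 2 ∧
    Nat.card {π : ExoticForest // orderF π.1 = 2} = 11 ∧
    Nat.card {π : ExoticForest // orderF π.1 = 3} = 95 := by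
  refine ⟨?_, ?_, ?_⟩ <;> rw [card_n]
  all_goals set_option maxRecDepth 100000 in decide
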